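/- arXiv:1111.0027 — 2 statements merged into one kernel-verified Lean document; each statement's English description precedes it below -/
import Mathlib

section
/- Under the spectral gap assumption, for all integers 1 ≤ j < i, the conditional expectation satisfies ‖E[f ∘ T_{[j]} | 𝓕_i]‖_∞ ≤ K τ^{i−j}. -/
/-!
Setting: `(X, 𝓕, μ)` a probability space, `A` an index set, `T a : X → X` measurable,
surjective, non-invertible, `μ`-preserving maps, and a fixed sequence `a 1, a 2, … ∈ A`.
`T_{[k]} := T_{a_k} ∘ ⋯ ∘ T_{a_1}`.  The Koopman operator `T̂ g = g ∘ T` acts on `L²(μ)` and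
the Perron–Frobenius operator `T̂*` is its `L²(μ)`-adjoint.
-/

open MeasureTheory ProbabilityTheory Filter
open scoped ENNReal Topology

/-- The Koopman operator `g ↦ g ∘ T` on `L²(μ)`. -/
noncomputable def koopman {X : Type*} [MeasurableSpace X] {μ : Measure X} {T : X → X}
    (hT : MeasurePreserving T μ μ) : Lp ℝ 2 μ →L[ℝ] Lp ℝ 2 μ :=
  (Lp.compMeasurePreservingₗᵢ ℝ T hT).toContinuousLinearMap

/-- The Perron–Frobenius operator: the `L²(μ)`-adjoint of the Koopman operator. -/
noncomputable def PF {X : Type*} [MeasurableSpace X] {μ : Measure X} {T : X → X}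
    (hT : MeasurePreserving T μ μ) : Lp ℝ 2 μ →L[ℝ] Lp ℝ 2 μ :=
  ContinuousLinearMap.adjoint (koopman hT)

/-- `Titer T a k = T_{[k]} = T_{a_k} ∘ ⋯ ∘ T_{a_1}` (the identity for `k = 0`). -/
def Titer {X A : Type*} (T : A → X → X) (a : ℕ → A) : ℕ → X → X
  | 0 => id
  | k + 1 => T (a (k + 1)) ∘ Titer T a k

/-- `PFseg hT a i j = T̂*_{[i..j]} = T̂*_{a_j} ⋯ T̂*_{a_i}` for `i ≤ j`, the identity otherwise. -/
noncomputable def PFseg {X A : Type*} [MeasurableSpace X] {μ : Measure X} {T : A → X → X}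
    (hT : ∀ b, MeasurePreserving (T b) μ μ) (a : ℕ → A) (i : ℕ) :
    ℕ → (Lp ℝ 2 μ →L[ℝ] Lp ℝ 2 μ)
  | 0 => ContinuousLinearMap.id ℝ _
  | j + 1 =>
    if i ≤ j + 1 then (PF (hT (a (j + 1)))).comp (PFseg hT a i j)
    else ContinuousLinearMap.id ℝ _

/-- `T̂*_{b_1} ⋯ T̂*_{b_k} g` for a finite sequence `[b_1, …, b_k]`. -/
noncomputable def PFlist {X A : Type*} [MeasurableSpace X] {μ : Measure X} {T : A → X → X}
    (hT : ∀ b, MeasurePreserving (T b) μ μ) (l : List A) (g : Lp ℝ 2 μ) : Lp ℝ 2 μ :=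
  l.foldr (fun b h => PF (hT b) h) g

/-- `useq hT a f k = u_k = ∑_{i=1}^k T̂*_{[i+1..k]} f`. -/
noncomputable def useq {X A : Type*} [MeasurableSpace X] {μ : Measure X} {T : A → X → X}
    (hT : ∀ b, MeasurePreserving (T b) μ μ) (a : ℕ → A) (f : Lp ℝ 2 μ) (k : ℕ) : Lp ℝ 2 μ :=
  ∑ i ∈ Finset.Icc 1 k, PFseg hT a (i + 1) k f

/-- The Birkhoff-like sums `S_n = ∑_{k=1}^n f ∘ T_{[k]}`. -/
def birkhoffS {X A : Type*} (T : A → X → X) (a : ℕ → A) (f : X → ℝ) (n : ℕ) : X → ℝ :=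
  fun x => ∑ k ∈ Finset.Icc 1 n, f (Titer T a k x)

/-- `cos²χ_k = ‖E[u_k | T_{a_{k+1}}^{-1}(𝓕)]‖²_{L²} / ‖u_k‖²_{L²}` (`= 0` when `u_k = 0`,
by the convention `c / 0 = 0`). -/
noncomputable def cos2chi {X A : Type*} [MeasurableSpace X] (μ : Measure X) {T : A → X → X}
    (hT : ∀ b, MeasurePreserving (T b) μ μ) (a : ℕ → A) (f : Lp ℝ 2 μ) (k : ℕ) : ℝ :=
  (∫ x, ((μ[(useq hT a f k : X → ℝ)|MeasurableSpace.comap (T (a (k + 1))) ‹_›]) x) ^ 2 ∂μ) /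
    ∫ x, ((useq hT a f k : X → ℝ) x) ^ 2 ∂μ

/-- `𝓕_k := T_{[k]}^{-1}(𝓕)`, the pullback σ-algebra. -/
def Fsig {X A : Type*} [m0 : MeasurableSpace X] (T : A → X → X) (a : ℕ → A) (k : ℕ) :
    MeasurableSpace X :=
  MeasurableSpace.comap (Titer T a k) m0

/-- `Z_k := u_k ∘ T_{[k]}`. -/
noncomputable def Zfun {X A : Type*} [MeasurableSpace X] {μ : Measure X} {T : A → X → X}
    (hT : ∀ b, MeasurePreserving (T b) μ μ) (a : ℕ → A) (f : Lp ℝ 2 μ) (k : ℕ) : X → ℝ :=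
  fun x => (useq hT a f k : X → ℝ) (Titer T a k x)

section Aux

variable {X A : Type*} [MeasurableSpace X] {μ : Measure X} {T : A → X → X}

local notation "⟪" x ", " y "⟫" => @inner ℝ _ _ x y

/-- Composition of the maps `T b` along a list: `Tcomp T [b₁, …, b_k] = T b₁ ∘ ⋯ ∘ T b_k`. -/
def Tcomp (T : A → X → X) : List A → X → X
  | [] => id
  | b :: l => T b ∘ Tcomp T l

lemma Tcomp_measurePreserving (hT : ∀ b, MeasurePreserving (T b) μ μ) :
    ∀ l : List A, MeasurePreserving (Tcomp T l) μ μ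
  | [] => MeasurePreserving.id μ
  | b :: l => (hT b).comp (Tcomp_measurePreserving hT l)

lemma Titer_measurePreserving (hT : ∀ b, MeasurePreserving (T b) μ μ) (a : ℕ → A) :
    ∀ k, MeasurePreserving (Titer T a k) μ μ
  | 0 => MeasurePreserving.id μ
  | k + 1 => (hT (a (k + 1))).comp (Titer_measurePreserving hT a k)

lemma Titer_eq_Tcomp (a : ℕ → A) (j : ℕ) :
    ∀ d, Titer T a (j + d) =
      Tcomp T ((List.range d).map fun m => a (j + d - m)) ∘ Titer T a j := by
  intro d
  induction d with
  | zero => simp [Tcomp]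
  | succ d ih =>
    have hlist : ((List.range (d + 1)).map fun m => a (j + (d + 1) - m)) =
        a (j + d + 1) :: ((List.range d).map fun m => a (j + d - m)) := by
      rw [List.range_succ_eq_map, List.map_cons, List.map_map]
      have h0 : j + (d + 1) - 0 = j + d + 1 := by omega
      rw [h0]
      congr 1
      refine List.map_congr_left fun m _ => ?_
      simp only [Function.comp_apply]
      congr 1
      omega
    show T (a (j + d + 1)) ∘ Titer T a (j + d) = _
    rw [hlist]
    show _ = T (a (j + d + 1)) ∘ (Tcomp T ((List.range d).map fun m => a (j + d - m)) ∘
      Titer T a j)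
    rw [ih]

lemma koopman_coeFn (hS : MeasurePreserving (S : X → X) μ μ) (g : Lp ℝ 2 μ) :
    (koopman hS g : X → ℝ) =ᵐ[μ] (g : X → ℝ) ∘ S :=
  Lp.coeFn_compMeasurePreserving g hS

lemma koopman_koopman (hS : MeasurePreserving (S : X → X) μ μ)
    (hS' : MeasurePreserving (S' : X → X) μ μ) (g : Lp ℝ 2 μ) :
    koopman hS (koopman hS' g) = koopman (hS'.comp hS) g := by
  apply Lp.ext
  filter_upwards [koopman_coeFn hS (koopman hS' g),
    hS.quasiMeasurePreserving.ae_eq (koopman_coeFn hS' g),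
    koopman_coeFn (hS'.comp hS) g] with x h1 h2 h3
  rw [h1]
  rw [h3]
  exact h2

lemma PFlist_inner (hT : ∀ b, MeasurePreserving (T b) μ μ) :
    ∀ (l : List A) (f g : Lp ℝ 2 μ),
      ⟪PFlist hT l f, g⟫ = ⟪f, koopman (Tcomp_measurePreserving hT l) g⟫
  | [], f, g => by
    have : koopman (Tcomp_measurePreserving hT ([] : List A)) g = g := by
      apply Lp.ext
      filter_upwards [koopman_coeFn (Tcomp_measurePreserving hT ([] : List A)) g] with x h1
      rw [h1]; rfl
    rw [this]; rfl
  | b :: l, f, g => by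
    have h1 : PFlist hT (b :: l) f = PF (hT b) (PFlist hT l f) := rfl
    rw [h1, PF, ContinuousLinearMap.adjoint_inner_left,
      PFlist_inner hT l f (koopman (hT b) g),
      koopman_koopman (Tcomp_measurePreserving hT l) (hT b) g]
    rfl

end Aux

/-- Under the spectral gap assumption, `‖E[f ∘ T_{[j]} | 𝓕_i]‖_∞ ≤ K τ^{i−j}` for `1 ≤ j < i`. -/
theorem condexp_birkhoff_term_bound
    {X : Type*} [MeasurableSpace X] (μ : Measure X) [IsProbabilityMeasure μ]
    {A : Type*} (T : A → X → X)
    (hTmeas : ∀ b, Measurable (T b))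
    (hT : ∀ b, MeasurePreserving (T b) μ μ)
    (hTsurj : ∀ b, Function.Surjective (T b))
    (hTnoninv : ∀ b, ¬Function.Injective (T b))
    (a : ℕ → A) (f : Lp ℝ 2 μ)
    (hfbdd : eLpNorm (f : X → ℝ) ∞ μ < ∞)
    (hfmean : ∫ x, f x ∂μ = 0)
    (K τ : ℝ) (hτ0 : 0 < τ) (hτ1 : τ < 1)
    (hgap : ∀ l : List A, l ≠ [] →
      eLpNorm (PFlist hT l f : X → ℝ) ∞ μ ≤ ENNReal.ofReal (K * τ ^ l.length)) :
    ∀ j i : ℕ, 1 ≤ j → j < i →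
      eLpNorm (μ[(fun x => (f : X → ℝ) (Titer T a j x))|Fsig T a i]) ∞ μ ≤
        ENNReal.ofReal (K * τ ^ (i - j)) := by
  intro j i hj hji
  have hle : j ≤ i := hji.le
  set l : List A := (List.range (i - j)).map (fun m => a (i - m)) with hl
  have hlen : l.length = i - j := by simp [hl]
  have hlne : l ≠ [] := by
    intro h
    rw [h] at hlen
    simp at hlen
    omega
  set R : X → X := Tcomp T l with hR
  have hRmp : MeasurePreserving R μ μ := Tcomp_measurePreserving hT l
  have hcomp : Titer T a i = R ∘ Titer T a j := by
    have := Titer_eq_Tcomp (T := T) a j (i - j)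
    rw [Nat.add_sub_cancel' hle] at this
    exact this
  have hTj : MeasurePreserving (Titer T a j) μ μ := Titer_measurePreserving hT a j
  have hTi : MeasurePreserving (Titer T a i) μ μ := Titer_measurePreserving hT a i
  have hm : Fsig T a i ≤ ‹MeasurableSpace X› := hTi.measurable.comap_le
  haveI : SigmaFinite (μ.trim hm) := by
    haveI : IsFiniteMeasure (μ.trim hm) := isFiniteMeasure_trim hm
    infer_instance
  set h : Lp ℝ 2 μ := PFlist hT l f with hh
  set cand : X → ℝ := fun x => (h : X → ℝ) (Titer T a i x) with hcand
  -- integrability facts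
  have hfint : Integrable (f : X → ℝ) μ := (Lp.memLp f).integrable one_le_two
  have hfcomp : Integrable (fun x => (f : X → ℝ) (Titer T a j x)) μ :=
    (hTj.integrable_comp (Lp.aestronglyMeasurable f)).2 hfint
  have hhint : Integrable (h : X → ℝ) μ := (Lp.memLp h).integrable one_le_two
  have hcandint : Integrable cand μ :=
    (hTi.integrable_comp (Lp.aestronglyMeasurable h)).2 hhint
  -- candidate is a.e. equal to the conditional expectation
  have hcondexp : cand =ᵐ[μ] μ[(fun x => (f : X → ℝ) (Titer T a j x))|Fsig T a i] := by
    refine ae_eq_condExp_of_forall_setIntegral_eq hm hfcomp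
      (fun s _ _ => hcandint.integrableOn) ?_ ?_
    · rintro s ⟨B, hB, rfl⟩ -
      have hBμ : μ B ≠ ∞ := measure_ne_top μ B
      set g0 : Lp ℝ 2 μ := indicatorConstLp 2 hB hBμ (1 : ℝ) with hg0
      -- LHS : ∫ over preimage of candidate equals ∫ h over B
      have hLHS : ∫ x in Titer T a i ⁻¹' B, cand x ∂μ = ∫ y in B, (h : X → ℝ) y ∂μ := by
        rw [← setIntegral_map hB (hTi.map_eq.symm ▸ Lp.aestronglyMeasurable h)
          hTi.aemeasurable, hTi.map_eq]
      -- the adjoint identity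
      have hinner : @inner ℝ _ _ h g0 = @inner ℝ _ _ f (koopman hRmp g0) := by
        rw [hh]
        exact PFlist_inner hT l f g0
      have hkoop : koopman hRmp g0 =
          indicatorConstLp 2 (hB.preimage hRmp.measurable)
            (by rwa [hRmp.measure_preimage hB.nullMeasurableSet]) (1 : ℝ) :=
        Lp.indicatorConstLp_compMeasurePreserving hB hBμ (1 : ℝ) hRmp
      have h1 : ∫ y in B, (h : X → ℝ) y ∂μ = @inner ℝ _ _ h g0 := by
        rw [real_inner_comm, L2.inner_indicatorConstLp_one hB hBμ h]
      have h2 : @inner ℝ _ _ f (koopman hRmp g0) = ∫ y in R ⁻¹' B, (f : X → ℝ) y ∂μ := by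
        rw [hkoop, real_inner_comm,
          L2.inner_indicatorConstLp_one (hB.preimage hRmp.measurable) _ f]
      have h3 : ∫ y in R ⁻¹' B, (f : X → ℝ) y ∂μ =
          ∫ x in Titer T a i ⁻¹' B, (f : X → ℝ) (Titer T a j x) ∂μ := by
        rw [hcomp, Set.preimage_comp,
          ← setIntegral_map (hB.preimage hRmp.measurable)
          (hTj.map_eq.symm ▸ Lp.aestronglyMeasurable f) hTj.aemeasurable, hTj.map_eq]
      rw [hLHS, h1, hinner, h2, h3]
    · refine StronglyMeasurable.aestronglyMeasurable ?_
      have hmeas : @Measurable X X (Fsig T a i) _ (Titer T a i) :=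
        measurable_iff_comap_le.mpr le_rfl
      exact (Lp.stronglyMeasurable h).comp_measurable hmeas
  rw [eLpNorm_congr_ae hcondexp.symm]
  have hnorm : eLpNorm cand ∞ μ = eLpNorm (h : X → ℝ) ∞ μ := by
    rw [hcand]
    exact eLpNorm_comp_measurePreserving (Lp.aestronglyMeasurable h) hTi
  rw [hnorm]
  have := hgap l hlne
  rwa [hlen] at this
end

section
/- For every n ≥ 1, Var_μ(S_n) = ‖u_n‖²_{L²} + ∑_{k=1}^{n−1} ( ‖u_k‖²_{L²} − ‖E[u_k | T_{a_{k+1}}^{-1}(𝓕)]‖²_{L²} ); equivalently, Var_μ(S_n) = Var_μ(Z_n) + ∑_{k=1}^{n−1} ‖u_k‖²_{L²}(1 − cos²χ_k). -/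
/-!
Setting: `(X, 𝓕, μ)` a probability space, `A` an index set, `T a : X → X` measurable,
surjective, non-invertible, `μ`-preserving maps, and a fixed sequence `a 1, a 2, … ∈ A`.
`T_{[k]} := T_{a_k} ∘ ⋯ ∘ T_{a_1}`.  The Koopman operator `T̂ g = g ∘ T` acts on `L²(μ)` and
the Perron–Frobenius operator `T̂*` is its `L²(μ)`-adjoint.
-/

open MeasureTheory ProbabilityTheory Filter
open scoped ENNReal Topology

/-! ### Auxiliary machinery -/

section Aux

local notation "⟪" x ", " y "⟫" => inner (𝕜 := ℝ) x y

variable {X : Type*} [m0 : MeasurableSpace X] {μ : Measure X} {A : Type*} {T : A → X → X}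

lemma koopman_coe {S : X → X} (hS : MeasurePreserving S μ μ) (g : Lp ℝ 2 μ) :
    (koopman hS g : X → ℝ) =ᵐ[μ] (g : X → ℝ) ∘ S :=
  Lp.coeFn_compMeasurePreserving g hS

lemma inner_koopman_koopman {S : X → X} (hS : MeasurePreserving S μ μ) (g h : Lp ℝ 2 μ) :
    ⟪koopman hS g, koopman hS h⟫ = ⟪g, h⟫ :=
  (Lp.compMeasurePreservingₗᵢ ℝ S hS).inner_map_map g h

set_option maxHeartbeats 1000000 in
lemma inner_PF_left {S : X → X} (hS : MeasurePreserving S μ μ) (g h : Lp ℝ 2 μ) :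
    ⟪PF hS g, h⟫ = ⟪g, koopman hS h⟫ :=
  ContinuousLinearMap.adjoint_inner_left (koopman hS) h g

lemma integral_sq_eq_normsq (g : Lp ℝ 2 μ) : ∫ x, (g x) ^ 2 ∂μ = ‖g‖ ^ 2 := by
  rw [← real_inner_self_eq_norm_sq g, L2.inner_def]
  simp [RCLike.inner_apply, sq]

/-- The constant function `1` as an element of `L²(μ)`. -/
noncomputable def oneL (μ : Measure X) [IsFiniteMeasure μ] : Lp ℝ 2 μ :=
  indicatorConstLp 2 MeasurableSet.univ (measure_ne_top μ Set.univ) (1 : ℝ)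

lemma inner_oneL [IsFiniteMeasure μ] (g : Lp ℝ 2 μ) : ⟪oneL μ, g⟫ = ∫ x, g x ∂μ := by
  rw [oneL, L2.inner_indicatorConstLp_one MeasurableSet.univ (measure_ne_top μ _) g,
    Measure.restrict_univ]

lemma koopman_oneL [IsFiniteMeasure μ] {S : X → X} (hS : MeasurePreserving S μ μ) :
    koopman hS (oneL μ) = oneL μ := by
  apply Lp.ext
  refine (koopman_coe hS _).trans ?_
  have h1 : (oneL μ : X → ℝ) =ᵐ[μ] fun _ => 1 := by
    refine indicatorConstLp_coeFn.trans ?_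
    simp [Set.indicator_univ]
  exact (hS.quasiMeasurePreserving.ae_eq h1).trans h1.symm

lemma Lp_coeFn_sum {ι : Type*} (s : Finset ι) (g : ι → Lp ℝ 2 μ) :
    ((∑ i ∈ s, g i : Lp ℝ 2 μ) : X → ℝ) =ᵐ[μ] fun x => ∑ i ∈ s, (g i : X → ℝ) x := by
  classical
  induction s using Finset.induction with
  | empty => simp only [Finset.sum_empty]; exact Lp.coeFn_zero ℝ 2 μ
  | @insert j s hj ih =>
    rw [Finset.sum_insert hj]
    refine (Lp.coeFn_add _ _).trans ?_
    filter_upwards [ih] with x hx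
    simp only [Pi.add_apply, hx, Finset.sum_insert hj]

section Ops

variable (hT : ∀ b, MeasurePreserving (T b) μ μ) (a : ℕ → A)

lemma Titer_mp (hT' : ∀ b, MeasurePreserving (T b) μ μ) (a' : ℕ → A) :
    ∀ k, MeasurePreserving (Titer T a' k) μ μ
  | 0 => MeasurePreserving.id μ
  | k + 1 => (hT' (a' (k + 1))).comp (Titer_mp hT' a' k)

/-- Koopman operator of `T_{[k]}`, defined by recursion. -/
noncomputable def Kop : ℕ → (Lp ℝ 2 μ →L[ℝ] Lp ℝ 2 μ)
  | 0 => ContinuousLinearMap.id ℝ _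
  | k + 1 => (Kop k).comp (koopman (hT (a (k + 1))))

lemma Kop_succ_apply (k : ℕ) (g : Lp ℝ 2 μ) :
    Kop hT a (k + 1) g = Kop hT a k (koopman (hT (a (k + 1))) g) := rfl

lemma Kop_coe (g : Lp ℝ 2 μ) :
    ∀ k, (Kop hT a k g : X → ℝ) =ᵐ[μ] (g : X → ℝ) ∘ Titer T a k := by
  intro k
  induction k generalizing g with
  | zero => exact EventuallyEq.rfl
  | succ k ih =>
    rw [Kop_succ_apply]
    refine (ih _).trans ?_
    have h2 : ((koopman (hT (a (k + 1))) g : X → ℝ)) ∘ Titer T a k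
        =ᵐ[μ] ((g : X → ℝ) ∘ T (a (k + 1))) ∘ Titer T a k :=
      (Titer_mp hT a k).quasiMeasurePreserving.ae_eq (koopman_coe _ g)
    exact h2.trans (by rfl)

lemma Kop_inner (k : ℕ) (g h : Lp ℝ 2 μ) : ⟪Kop hT a k g, Kop hT a k h⟫ = ⟪g, h⟫ := by
  induction k generalizing g h with
  | zero => rfl
  | succ k ih =>
    rw [Kop_succ_apply, Kop_succ_apply, ih, inner_koopman_koopman]

lemma Kop_norm (k : ℕ) (g : Lp ℝ 2 μ) : ‖Kop hT a k g‖ = ‖g‖ := by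
  induction k generalizing g with
  | zero => rfl
  | succ k ih =>
    rw [Kop_succ_apply, ih]
    exact (Lp.compMeasurePreservingₗᵢ ℝ _ (hT (a (k + 1)))).norm_map g

lemma Kop_oneL [IsFiniteMeasure μ] : ∀ k, Kop hT a k (oneL μ) = oneL μ := by
  intro k
  induction k with
  | zero => rfl
  | succ k ih => rw [Kop_succ_apply, koopman_oneL, ih]

lemma integral_Kop [IsFiniteMeasure μ] (k : ℕ) (g : Lp ℝ 2 μ) :
    ∫ x, (Kop hT a k g : X → ℝ) x ∂μ = ∫ x, g x ∂μ := by
  rw [← inner_oneL, ← inner_oneL]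
  conv_lhs => rw [← Kop_oneL hT a k]
  rw [Kop_inner]

lemma integral_PF [IsFiniteMeasure μ] {S : X → X} (hS : MeasurePreserving S μ μ)
    (g : Lp ℝ 2 μ) :
    ∫ x, (PF hS g : X → ℝ) x ∂μ = ∫ x, g x ∂μ := by
  rw [← inner_oneL, ← inner_oneL, real_inner_comm, inner_PF_left, koopman_oneL,
    real_inner_comm]

lemma PFseg_of_lt : ∀ {i j : ℕ}, j < i → PFseg hT a i j = ContinuousLinearMap.id ℝ _
  | _, 0, _ => rfl
  | _, j + 1, h => by rw [PFseg, if_neg (by omega)]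

lemma PFseg_succ_of_le {i j : ℕ} (h : i ≤ j + 1) :
    PFseg hT a i (j + 1) = (PF (hT (a (j + 1)))).comp (PFseg hT a i j) := by
  rw [PFseg, if_pos h]

lemma useq_zero (f : Lp ℝ 2 μ) : useq hT a f 0 = 0 := by simp [useq]

lemma useq_succ (f : Lp ℝ 2 μ) (k : ℕ) :
    useq hT a f (k + 1) = PF (hT (a (k + 1))) (useq hT a f k) + f := by
  rw [useq, Finset.sum_Icc_succ_top (by omega : 1 ≤ k + 1)]
  rw [PFseg_of_lt hT a (by omega : k + 1 < k + 1 + 1)]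
  congr 1
  rw [useq, map_sum]
  refine Finset.sum_congr rfl fun i hi => ?_
  have hi' : i ≤ k := (Finset.mem_Icc.1 hi).2
  rw [PFseg_succ_of_le hT a (by omega : i + 1 ≤ k + 1)]
  rfl

lemma integral_useq [IsFiniteMeasure μ] (f : Lp ℝ 2 μ) (hf : ∫ x, f x ∂μ = 0) :
    ∀ k, ∫ x, (useq hT a f k : X → ℝ) x ∂μ = 0 := by
  intro k
  induction k with
  | zero =>
    rw [useq_zero, ← inner_oneL, inner_zero_right]
  | succ k ih =>
    rw [useq_succ, ← inner_oneL, inner_add_right, inner_oneL, inner_oneL, integral_PF,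
      ih, hf, add_zero]

lemma inner_Kop_Kop (f : Lp ℝ 2 μ) (k : ℕ) :
    ∀ i, i ≤ k → ∀ g : Lp ℝ 2 μ,
      ⟪Kop hT a i f, Kop hT a k g⟫ = ⟪PFseg hT a (i + 1) k f, g⟫ := by
  induction k with
  | zero =>
    intro i h g
    obtain rfl : i = 0 := Nat.le_zero.1 h
    rfl
  | succ k ih =>
    intro i h g
    rcases eq_or_lt_of_le h with rfl | h'
    · rw [Kop_inner, PFseg_of_lt hT a (by omega : k + 1 < k + 1 + 1)]
      rfl
    · have hik : i ≤ k := by omega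
      rw [Kop_succ_apply, ih i hik,
        PFseg_succ_of_le hT a (by omega : i + 1 ≤ k + 1), ContinuousLinearMap.comp_apply,
        inner_PF_left]

/-- `S_n` as an element of `L²`. -/
noncomputable def Snl (f : Lp ℝ 2 μ) (n : ℕ) : Lp ℝ 2 μ :=
  ∑ k ∈ Finset.Icc 1 n, Kop hT a k f

lemma inner_Snl_Kop (f : Lp ℝ 2 μ) (k : ℕ) (g : Lp ℝ 2 μ) :
    ⟪Snl hT a f k, Kop hT a k g⟫ = ⟪useq hT a f k, g⟫ := by
  rw [Snl, useq, sum_inner, sum_inner]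
  exact Finset.sum_congr rfl fun i hi =>
    inner_Kop_Kop hT a f k i (Finset.mem_Icc.1 hi).2 g

lemma integral_Snl [IsFiniteMeasure μ] (f : Lp ℝ 2 μ) (hf : ∫ x, f x ∂μ = 0) (n : ℕ) :
    ∫ x, (Snl hT a f n : X → ℝ) x ∂μ = 0 := by
  rw [← inner_oneL, Snl, inner_sum]
  refine Finset.sum_eq_zero fun k _ => ?_
  rw [← Kop_oneL hT a k, Kop_inner, inner_oneL, hf]

lemma birkhoffS_ae_Snl (f : Lp ℝ 2 μ) (n : ℕ) :
    birkhoffS T a (f : X → ℝ) n =ᵐ[μ] (Snl hT a f n : X → ℝ) := by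
  have h2 : ∀ᵐ x ∂μ, ∀ k ∈ Finset.Icc 1 n,
      (Kop hT a k f : X → ℝ) x = (f : X → ℝ) (Titer T a k x) :=
    (Filter.eventually_all_finset _).2 fun k _ => Kop_coe hT a f k
  have h1 : ((Snl hT a f n : Lp ℝ 2 μ) : X → ℝ)
      =ᵐ[μ] fun x => ∑ k ∈ Finset.Icc 1 n, (Kop hT a k f : X → ℝ) x :=
    Lp_coeFn_sum _ _
  filter_upwards [h1, h2] with x hx h2x
  show ∑ k ∈ Finset.Icc 1 n, (f : X → ℝ) (Titer T a k x) = _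
  rw [hx]
  exact Finset.sum_congr rfl fun k hk => (h2x k hk).symm

lemma norm_Snl_sq [IsFiniteMeasure μ] (f : Lp ℝ 2 μ) :
    ∀ n, 1 ≤ n →
      ‖Snl hT a f n‖ ^ 2 =
        ‖useq hT a f n‖ ^ 2 +
          ∑ k ∈ Finset.Icc 1 (n - 1),
            (‖useq hT a f k‖ ^ 2 - ‖PF (hT (a (k + 1))) (useq hT a f k)‖ ^ 2) := by
  intro n hn
  induction n, hn using Nat.le_induction with
  | base =>
    have h1 : Snl hT a f 1 = Kop hT a 1 f := by
      rw [Snl]; simp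
    have h2 : useq hT a f 1 = f := by
      rw [useq_succ, useq_zero, map_zero, zero_add]
    rw [h1, h2]
    simp [Kop_norm]
  | succ n hn ih =>
    obtain ⟨m, rfl⟩ : ∃ m, n = m + 1 := ⟨n - 1, by omega⟩
    have hstep : Snl hT a f (m + 1 + 1) = Snl hT a f (m + 1) + Kop hT a (m + 1 + 1) f := by
      rw [Snl, Snl, Finset.sum_Icc_succ_top (by omega : 1 ≤ m + 1 + 1)]
    have hcross : ⟪Snl hT a f (m + 1), Kop hT a (m + 1 + 1) f⟫
        = ⟪PF (hT (a (m + 1 + 1))) (useq hT a f (m + 1)), f⟫ := by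
      rw [Kop_succ_apply, inner_Snl_Kop, inner_PF_left]
    have hnorm1 : ‖Snl hT a f (m + 1 + 1)‖ ^ 2 = ‖Snl hT a f (m + 1)‖ ^ 2
        + 2 * ⟪PF (hT (a (m + 1 + 1))) (useq hT a f (m + 1)), f⟫ + ‖f‖ ^ 2 := by
      rw [hstep, norm_add_sq_real, hcross, Kop_norm]
    have hnorm2 : ‖useq hT a f (m + 1 + 1)‖ ^ 2
        = ‖PF (hT (a (m + 1 + 1))) (useq hT a f (m + 1))‖ ^ 2
          + 2 * ⟪PF (hT (a (m + 1 + 1))) (useq hT a f (m + 1)), f⟫ + ‖f‖ ^ 2 := by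
      rw [useq_succ, norm_add_sq_real]
    have hsum : ∑ k ∈ Finset.Icc 1 (m + 1 + 1 - 1),
          (‖useq hT a f k‖ ^ 2 - ‖PF (hT (a (k + 1))) (useq hT a f k)‖ ^ 2)
        = (∑ k ∈ Finset.Icc 1 (m + 1 - 1),
            (‖useq hT a f k‖ ^ 2 - ‖PF (hT (a (k + 1))) (useq hT a f k)‖ ^ 2))
          + (‖useq hT a f (m + 1)‖ ^ 2
              - ‖PF (hT (a (m + 1 + 1))) (useq hT a f (m + 1))‖ ^ 2) := by
      have he : m + 1 + 1 - 1 = (m + 1 - 1) + 1 := by omega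
      rw [he, Finset.sum_Icc_succ_top (by omega : 1 ≤ m + 1 - 1 + 1)]
      norm_num
    rw [hsum]
    linarith [hnorm1, hnorm2, ih]

end Ops

section CondexpVar

variable [IsProbabilityMeasure μ]

lemma condexp_comap_eq {S : X → X} (hSm : Measurable S) (hS : MeasurePreserving S μ μ)
    (g : Lp ℝ 2 μ) :
    μ[(g : X → ℝ)|MeasurableSpace.comap S m0] =ᵐ[μ] (koopman hS (PF hS g) : X → ℝ) := by
  have hm : MeasurableSpace.comap S m0 ≤ m0 := hSm.comap_le
  refine (ae_eq_condExp_of_forall_setIntegral_eq hm ((Lp.memLp g).integrable one_le_two)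
    (fun s _ _ => ((Lp.memLp _).integrable one_le_two).integrableOn) ?_ ?_).symm
  · rintro s ⟨t, ht, rfl⟩ -
    have h1 : ∫ x in S ⁻¹' t, (koopman hS (PF hS g) : X → ℝ) x ∂μ
        = ⟪(indicatorConstLp 2 (ht.preimage hSm) (measure_ne_top μ _) (1 : ℝ)),
            koopman hS (PF hS g)⟫ :=
      (L2.inner_indicatorConstLp_one (ht.preimage hSm) (measure_ne_top μ _) _).symm
    have h2 : ∫ x in S ⁻¹' t, (g : X → ℝ) x ∂μ
        = ⟪(indicatorConstLp 2 (ht.preimage hSm) (measure_ne_top μ _) (1 : ℝ)), g⟫ :=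
      (L2.inner_indicatorConstLp_one (ht.preimage hSm) (measure_ne_top μ _) _).symm
    have hko : koopman hS (indicatorConstLp 2 ht (measure_ne_top μ t) (1 : ℝ))
        = indicatorConstLp 2 (ht.preimage hSm) (measure_ne_top μ _) (1 : ℝ) :=
      Lp.indicatorConstLp_compMeasurePreserving ht (measure_ne_top μ t) 1 hS
    rw [h1, h2, ← hko, inner_koopman_koopman, real_inner_comm, inner_PF_left, hko,
      real_inner_comm]
  · obtain h := Lp.aestronglyMeasurable (PF hS g)
    refine ⟨h.mk _ ∘ S,
      h.stronglyMeasurable_mk.comp_measurable (measurable_iff_comap_le.mpr le_rfl), ?_⟩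
    exact (koopman_coe hS _).trans (hS.quasiMeasurePreserving.ae_eq h.ae_eq_mk)

lemma my_evariance_congr {g h : X → ℝ} (hgh : g =ᵐ[μ] h) : evariance g μ = evariance h μ := by
  have h1 : ∫ x, g x ∂μ = ∫ x, h x ∂μ := integral_congr_ae hgh
  show ∫⁻ ω, (‖g ω - ∫ x, g x ∂μ‖₊ : ℝ≥0∞) ^ 2 ∂μ
      = ∫⁻ ω, (‖h ω - ∫ x, h x ∂μ‖₊ : ℝ≥0∞) ^ 2 ∂μ
  rw [h1]
  exact lintegral_congr_ae (hgh.mono fun x hx => by simp [hx])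

lemma my_variance_congr {g h : X → ℝ} (hgh : g =ᵐ[μ] h) : variance g μ = variance h μ :=
  congrArg ENNReal.toReal (my_evariance_congr hgh)

lemma variance_coe_eq (g : Lp ℝ 2 μ) (hg : ∫ x, g x ∂μ = 0) :
    variance (g : X → ℝ) μ = ∫ x, ((g : X → ℝ) x) ^ 2 ∂μ := by
  rw [variance_eq_sub (Lp.memLp g)]
  have hz : (∫ x, (g : X → ℝ) x ∂μ) = 0 := hg
  simp only [Pi.pow_apply, hz]
  ring_nf

end CondexpVar

end Aux

/-- For `n ≥ 1`,
`Var_μ(S_n) = ‖u_n‖² + ∑_{k=1}^{n−1} (‖u_k‖² − ‖E[u_k | T_{a_{k+1}}^{-1}(𝓕)]‖²)`;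
equivalently `Var_μ(S_n) = Var_μ(Z_n) + ∑_{k=1}^{n−1} ‖u_k‖² (1 − cos²χ_k)`. -/
theorem variance_birkhoff_eq_sum_angles
    {X : Type*} [MeasurableSpace X] (μ : Measure X) [IsProbabilityMeasure μ]
    {A : Type*} (T : A → X → X)
    (hTmeas : ∀ b, Measurable (T b))
    (hT : ∀ b, MeasurePreserving (T b) μ μ)
    (hTsurj : ∀ b, Function.Surjective (T b))
    (hTnoninv : ∀ b, ¬Function.Injective (T b))
    (a : ℕ → A) (f : Lp ℝ 2 μ) (hfmean : ∫ x, f x ∂μ = 0) :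
    ∀ n : ℕ, 1 ≤ n →
      variance (birkhoffS T a (f : X → ℝ) n) μ =
        (∫ x, ((useq hT a f n : X → ℝ) x) ^ 2 ∂μ) +
          ∑ k ∈ Finset.Icc 1 (n - 1),
            ((∫ x, ((useq hT a f k : X → ℝ) x) ^ 2 ∂μ) -
              ∫ x, ((μ[(useq hT a f k : X → ℝ)|
                MeasurableSpace.comap (T (a (k + 1))) ‹_›]) x) ^ 2 ∂μ) ∧
      variance (birkhoffS T a (f : X → ℝ) n) μ =
        variance (Zfun hT a f n) μ +
          ∑ k ∈ Finset.Icc 1 (n - 1),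
            (∫ x, ((useq hT a f k : X → ℝ) x) ^ 2 ∂μ) * (1 - cos2chi μ hT a f k) := by
  intro n hn
  have hVarS : variance (birkhoffS T a (f : X → ℝ) n) μ = ‖Snl hT a f n‖ ^ 2 := by
    rw [my_variance_congr (birkhoffS_ae_Snl hT a f n),
      variance_coe_eq _ (integral_Snl hT a f hfmean n), integral_sq_eq_normsq]
  have husq : ∀ k, ∫ x, ((useq hT a f k : X → ℝ) x) ^ 2 ∂μ = ‖useq hT a f k‖ ^ 2 :=
    fun k => integral_sq_eq_normsq _
  have hE : ∀ k : ℕ,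
      (∫ x, ((μ[(useq hT a f k : X → ℝ)|
          MeasurableSpace.comap (T (a (k + 1))) ‹_›]) x) ^ 2 ∂μ)
        = ‖PF (hT (a (k + 1))) (useq hT a f k)‖ ^ 2 := by
    intro k
    have h1 := condexp_comap_eq (hTmeas (a (k + 1))) (hT (a (k + 1))) (useq hT a f k)
    rw [integral_congr_ae (h1.mono fun x hx => by rw [hx]), integral_sq_eq_normsq]
    have h2 := inner_koopman_koopman (hT (a (k + 1)))
      (PF (hT (a (k + 1))) (useq hT a f k)) (PF (hT (a (k + 1))) (useq hT a f k))
    rwa [real_inner_self_eq_norm_sq, real_inner_self_eq_norm_sq] at h2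
  have key := norm_Snl_sq hT a f n hn
  have hZ : variance (Zfun hT a f n) μ = ‖useq hT a f n‖ ^ 2 := by
    have hae : Zfun hT a f n =ᵐ[μ] (Kop hT a n (useq hT a f n) : X → ℝ) :=
      (Kop_coe hT a (useq hT a f n) n).symm
    rw [my_variance_congr hae,
      variance_coe_eq _ ((integral_Kop hT a n _).trans (integral_useq hT a f hfmean n)),
      integral_sq_eq_normsq, Kop_norm]
  constructor
  · rw [hVarS, key, husq]
    congr 1
    exact Finset.sum_congr rfl fun k _ => by rw [husq, hE]
  · rw [hVarS, key, hZ]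
    congr 1
    refine Finset.sum_congr rfl fun k _ => ?_
    rw [cos2chi, hE k, husq k]
    by_cases h0 : ‖useq hT a f k‖ ^ 2 = 0
    · have hu0 : useq hT a f k = 0 := by
        rwa [pow_eq_zero_iff (two_ne_zero), norm_eq_zero] at h0
      rw [hu0]
      simp
    · rw [mul_sub, mul_one, mul_div_assoc', mul_div_cancel_left₀ _ h0]
end
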